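/- Let X, Θ, Y be separable real Hilbert spaces, U = X × Θ with norm ‖(x,θ)‖_U² = ‖x‖_X² + ‖θ‖_Θ², and F : U → Y Lipschitz with constant L. Let H be the class of all maps E : U → Y that are Lipschitz with constant at most R and satisfy ‖E(0)‖_Y ≤ B. Fix a deployment law ν_dep, a Borel probability measure on U with finite second moment, and define J(ν) = inf_{E∈H} R_ν(E) + c(ν,ν_dep) · W₂(ν,ν_dep). Then for every Borel probability measure ν on U with finite second moment, 0 ≤ J(ν) − J(ν_dep) ≤ 2 · c(ν,ν_dep) · W₂(ν,ν_dep). -/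

import Mathlib

open MeasureTheory
open scoped ENNReal NNReal

noncomputable section

/-- The Hilbert norm on the product `U = X × Θ`: `‖(x, θ)‖_U = √(‖x‖² + ‖θ‖²)`. -/
def nU {X Θ : Type*} [NormedAddCommGroup X] [NormedAddCommGroup Θ] (u : X × Θ) : ℝ :=
  Real.sqrt (‖u.1‖ ^ 2 + ‖u.2‖ ^ 2)

/-- The 2-Wasserstein distance associated with a cost function `d`: the infimum over all
couplings `γ` of `μ` and `μ'` (i.e. probability measures on the product whose marginals are
`μ` and `μ'`) of `(∫ d(u,v)² dγ)^{1/2}`. -/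
def W2 {α : Type*} [MeasurableSpace α] (d : α → α → ℝ) (μ μ' : Measure α) : ℝ :=
  sInf { r : ℝ | ∃ γ : Measure (α × α), IsProbabilityMeasure γ ∧
      γ.map Prod.fst = μ ∧ γ.map Prod.snd = μ' ∧
      r = Real.sqrt (∫ p, d p.1 p.2 ^ 2 ∂γ) }

/-- The squared-error risk `R_ν(E) = ∫ ‖F(u) - E(u)‖² dν(u)`. -/
def risk {X Θ Y : Type*} [NormedAddCommGroup X] [NormedAddCommGroup Θ] [NormedAddCommGroup Y]
    [MeasurableSpace X] [MeasurableSpace Θ] (F E : X × Θ → Y) (ν : Measure (X × Θ)) : ℝ :=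
  ∫ u, ‖F u - E u‖ ^ 2 ∂ν

/-- The hypothesis class `H`: all maps `E : U → Y` that are Lipschitz with constant at most
`R₀` (with respect to the Hilbert product norm on `U`) and satisfy `‖E 0‖ ≤ B`. -/
def Hclass {X Θ Y : Type*} [NormedAddCommGroup X] [NormedAddCommGroup Θ] [NormedAddCommGroup Y]
    (R₀ B : ℝ) : Set (X × Θ → Y) :=
  { E | (∀ u v, ‖E u - E v‖ ≤ R₀ * nU (u - v)) ∧ ‖E 0‖ ≤ B }

/-- The constant `c(ν,ν') = C₁² √(2(∫‖u‖_U² dν + ∫‖u‖_U² dν')) + 2 C₁ C₂`, where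
`C₁ = L + R₀` and `C₂ = ‖F 0‖ + B`. -/
def cShift {X Θ Y : Type*} [NormedAddCommGroup X] [NormedAddCommGroup Θ] [NormedAddCommGroup Y]
    [MeasurableSpace X] [MeasurableSpace Θ] (L R₀ B : ℝ) (F : X × Θ → Y)
    (ν ν' : Measure (X × Θ)) : ℝ :=
  (L + R₀) ^ 2 * Real.sqrt (2 * ((∫ u, nU u ^ 2 ∂ν) + ∫ u, nU u ^ 2 ∂ν'))
    + 2 * (L + R₀) * (‖F 0‖ + B)

/-- The bound objective `J(ν) = inf_{E ∈ H} R_ν(E) + c(ν, ν_dep) W₂(ν, ν_dep)`, where the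
Wasserstein distance on `U = X × Θ` is taken with respect to the Hilbert product norm. -/
def Jobj {X Θ Y : Type*} [NormedAddCommGroup X] [NormedAddCommGroup Θ] [NormedAddCommGroup Y]
    [MeasurableSpace X] [MeasurableSpace Θ] (L R₀ B : ℝ) (F : X × Θ → Y)
    (νdep ν : Measure (X × Θ)) : ℝ :=
  sInf ((fun E => risk F E ν) '' Hclass R₀ B)
    + cShift L R₀ B F ν νdep * W2 (fun u v => nU (u - v)) ν νdep

section Helpers

variable {X Θ : Type*} [NormedAddCommGroup X] [NormedAddCommGroup Θ]

lemma nU_eq (u : X × Θ) : nU u = ‖(WithLp.equiv 2 (X × Θ)).symm u‖ := by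
  rw [WithLp.prod_norm_eq_of_L2]; rfl

lemma nU_nonneg (u : X × Θ) : 0 ≤ nU u := Real.sqrt_nonneg _

lemma nU_zero : nU (0 : X × Θ) = 0 := by simp [nU]

lemma nU_neg (u : X × Θ) : nU (-u) = nU u := by simp [nU]

lemma nU_sub_rev (u v : X × Θ) : nU (u - v) = nU (v - u) := by
  rw [← nU_neg (u - v), neg_sub]

lemma nU_add_le (u v : X × Θ) : nU (u + v) ≤ nU u + nU v := by
  simp only [nU_eq, WithLp.equiv_symm_apply, WithLp.toLp_add]
  exact norm_add_le _ _

lemma nU_sub_le (u v : X × Θ) : nU (u - v) ≤ nU u + nU v := by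
  rw [sub_eq_add_neg]
  exact (nU_add_le u (-v)).trans (by rw [nU_neg])

lemma nU_continuous : Continuous (nU : X × Θ → ℝ) := by
  apply Real.continuous_sqrt.comp
  fun_prop

lemma continuous_of_nU_lip {Y : Type*} [NormedAddCommGroup Y] {K : ℝ} {E : X × Θ → Y}
    (h : ∀ u v, ‖E u - E v‖ ≤ K * nU (u - v)) : Continuous E := by
  rw [continuous_iff_continuousAt]
  intro v
  rw [ContinuousAt, tendsto_iff_norm_sub_tendsto_zero]
  have hb : Filter.Tendsto (fun u : X × Θ => K * nU (u - v)) (nhds v) (nhds 0) := by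
    have : Filter.Tendsto (fun u : X × Θ => nU (u - v)) (nhds v) (nhds (nU (v - v))) :=
      (nU_continuous.comp (continuous_id.sub continuous_const)).tendsto v
    simpa [nU_zero] using this.const_mul K
  exact squeeze_zero (fun u => norm_nonneg _) (fun u => h u v) hb

end Helpers

section CS

variable {α : Type*} [MeasurableSpace α]

lemma integral_mul_le_sqrt_mul_sqrt (μ : Measure α) {f g : α → ℝ}
    (hf0 : ∀ x, 0 ≤ f x) (hg0 : ∀ x, 0 ≤ g x)
    (hfg : Integrable (fun x => f x * g x) μ)
    (hf2 : Integrable (fun x => f x ^ 2) μ) (hg2 : Integrable (fun x => g x ^ 2) μ) :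
    ∫ x, f x * g x ∂μ ≤ Real.sqrt (∫ x, f x ^ 2 ∂μ) * Real.sqrt (∫ x, g x ^ 2 ∂μ) := by
  have hA : 0 ≤ ∫ x, f x ^ 2 ∂μ := integral_nonneg fun x => sq_nonneg _
  have hG : 0 ≤ ∫ x, g x ^ 2 ∂μ := integral_nonneg fun x => sq_nonneg _
  rcases eq_or_lt_of_le hA with hA0 | hA'
  · have hfz : (fun x => f x ^ 2) =ᵐ[μ] 0 :=
      (integral_eq_zero_iff_of_nonneg (fun x => sq_nonneg _) hf2).mp hA0.symm
    have : (fun x => f x * g x) =ᵐ[μ] 0 := by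
      filter_upwards [hfz] with x hx
      simp only [Pi.zero_apply] at hx
      have : f x = 0 := (pow_eq_zero_iff two_ne_zero).mp hx
      simp [this]
    rw [integral_congr_ae this]
    simp only [Pi.zero_apply, integral_zero]
    positivity
  rcases eq_or_lt_of_le hG with hG0 | hG'
  · have hgz : (fun x => g x ^ 2) =ᵐ[μ] 0 :=
      (integral_eq_zero_iff_of_nonneg (fun x => sq_nonneg _) hg2).mp hG0.symm
    have : (fun x => f x * g x) =ᵐ[μ] 0 := by
      filter_upwards [hgz] with x hx
      simp only [Pi.zero_apply] at hx
      have : g x = 0 := (pow_eq_zero_iff two_ne_zero).mp hx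
      simp [this]
    rw [integral_congr_ae this]
    simp only [Pi.zero_apply, integral_zero]
    positivity
  set A := ∫ x, f x ^ 2 ∂μ
  set G := ∫ x, g x ^ 2 ∂μ
  set a := Real.sqrt A with ha_def
  set b := Real.sqrt G with hb_def
  have ha : 0 < a := Real.sqrt_pos.mpr hA'
  have hb : 0 < b := Real.sqrt_pos.mpr hG'
  have ha2 : a ^ 2 = A := Real.sq_sqrt hA'.le
  have hb2 : b ^ 2 = G := Real.sq_sqrt hG'.le
  have key : ∀ x, (a * b) * (f x * g x) ≤ (b ^ 2 * f x ^ 2 + a ^ 2 * g x ^ 2) / 2 := by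
    intro x
    nlinarith [sq_nonneg (b * f x - a * g x)]
  have hint : Integrable (fun x => (b ^ 2 * f x ^ 2 + a ^ 2 * g x ^ 2) / 2) μ :=
    ((hf2.const_mul _).add (hg2.const_mul _)).div_const 2
  have hchain : (a * b) * ∫ x, f x * g x ∂μ ≤ (a * b) * (a * b) := by
    calc (a * b) * ∫ x, f x * g x ∂μ = ∫ x, (a * b) * (f x * g x) ∂μ :=
          (integral_const_mul _ _).symm
      _ ≤ ∫ x, (b ^ 2 * f x ^ 2 + a ^ 2 * g x ^ 2) / 2 ∂μ :=
          integral_mono (hfg.const_mul _) hint key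
      _ = (b ^ 2 * A + a ^ 2 * G) / 2 := by
          rw [integral_div, integral_add (hf2.const_mul _) (hg2.const_mul _),
            integral_const_mul, integral_const_mul]
      _ = (a * b) * (a * b) := by rw [← ha2, ← hb2]; ring
  exact le_of_mul_le_mul_left hchain (mul_pos ha hb)

lemma integral_le_sqrt_integral_sq (μ : Measure α) [IsProbabilityMeasure μ] {f : α → ℝ}
    (hf0 : ∀ x, 0 ≤ f x) (hf : Integrable f μ) (hf2 : Integrable (fun x => f x ^ 2) μ) :
    ∫ x, f x ∂μ ≤ Real.sqrt (∫ x, f x ^ 2 ∂μ) := by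
  have := integral_mul_le_sqrt_mul_sqrt μ hf0 (fun _ => zero_le_one (α := ℝ))
    (g := fun _ => (1 : ℝ)) (by simpa using hf) hf2 (by simpa using integrable_const (1:ℝ))
  simpa using this

lemma le_mul_sInf {c A : ℝ} (hc : 0 ≤ c) {S : Set ℝ} (hS : S.Nonempty)
    (h : ∀ r ∈ S, A ≤ c * r) : A ≤ c * sInf S := by
  rcases eq_or_lt_of_le hc with rfl | hc'
  · obtain ⟨r, hr⟩ := hS
    simpa using h r hr
  · rw [mul_comm, ← div_le_iff₀ hc']
    refine le_csInf hS fun r hr => ?_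
    rw [div_le_iff₀ hc']
    linarith [h r hr]

end CS

variable {X Θ Y : Type*}
  [NormedAddCommGroup X] [InnerProductSpace ℝ X] [CompleteSpace X]
  [SecondCountableTopology X] [MeasurableSpace X] [BorelSpace X]
  [NormedAddCommGroup Θ] [InnerProductSpace ℝ Θ] [CompleteSpace Θ]
  [SecondCountableTopology Θ] [MeasurableSpace Θ] [BorelSpace Θ]
  [NormedAddCommGroup Y] [InnerProductSpace ℝ Y] [CompleteSpace Y]
  [SecondCountableTopology Y]

lemma W2_self_nU (μ : Measure (X × Θ)) [IsProbabilityMeasure μ] :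
    W2 (fun u v => nU (u - v)) μ μ = 0 := by
  have hdiag : Measurable (fun u : X × Θ => (u, u)) := measurable_id.prodMk measurable_id
  have hcont : Continuous (fun p : (X × Θ) × (X × Θ) => nU (p.1 - p.2) ^ 2) :=
    (nU_continuous.comp (continuous_fst.sub continuous_snd)).pow 2
  have hmem : (0 : ℝ) ∈ { r : ℝ | ∃ γ : Measure ((X × Θ) × (X × Θ)), IsProbabilityMeasure γ ∧
      γ.map Prod.fst = μ ∧ γ.map Prod.snd = μ ∧
      r = Real.sqrt (∫ p, nU (p.1 - p.2) ^ 2 ∂γ) } := by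
    refine ⟨μ.map (fun u => (u, u)), Measure.isProbabilityMeasure_map hdiag.aemeasurable, ?_, ?_, ?_⟩
    · rw [Measure.map_map measurable_fst hdiag]
      exact Measure.map_id'
    · rw [Measure.map_map measurable_snd hdiag]
      exact Measure.map_id'
    · rw [integral_map hdiag.aemeasurable hcont.aestronglyMeasurable]
      simp [nU_zero]
  refine le_antisymm (csInf_le ⟨0, fun r hr => ?_⟩ hmem) (Real.sInf_nonneg fun r hr => ?_) <;>
    · obtain ⟨γ, _, _, _, rfl⟩ := hr
      exact Real.sqrt_nonneg _


set_option maxHeartbeats 1000000 in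
lemma risk_core (F : X × Θ → Y) (L R B : ℝ) (hL : 0 ≤ L) (hR : 0 ≤ R) (hB : 0 ≤ B)
    (hF : ∀ u v : X × Θ, ‖F u - F v‖ ≤ L * nU (u - v))
    {E : X × Θ → Y} (hE : E ∈ Hclass R B)
    (ν ν' : Measure (X × Θ)) [IsProbabilityMeasure ν] [IsProbabilityMeasure ν']
    (hν : Integrable (fun u => nU u ^ 2) ν) (hν' : Integrable (fun u => nU u ^ 2) ν')
    (γ : Measure ((X × Θ) × (X × Θ))) [IsProbabilityMeasure γ]
    (hγ1 : γ.map Prod.fst = ν) (hγ2 : γ.map Prod.snd = ν') :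
    risk F E ν - risk F E ν' ≤
      cShift L R B F ν ν' * Real.sqrt (∫ p, nU (p.1 - p.2) ^ 2 ∂γ) := by
  obtain ⟨hElip, hE0⟩ := hE
  have hC1 : 0 ≤ L + R := add_nonneg hL hR
  have hC2 : 0 ≤ ‖F 0‖ + B := add_nonneg (norm_nonneg _) hB
  have hFc : Continuous F := continuous_of_nU_lip hF
  have hEc : Continuous E := continuous_of_nU_lip hElip
  have hgc : Continuous fun u => F u - E u := hFc.sub hEc
  have hglip : ∀ u v, ‖(F u - E u) - (F v - E v)‖ ≤ (L + R) * nU (u - v) := by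
    intro u v
    have h0 : (F u - E u) - (F v - E v) = (F u - F v) - (E u - E v) := by abel
    rw [h0]
    calc ‖(F u - F v) - (E u - E v)‖ ≤ ‖F u - F v‖ + ‖E u - E v‖ := norm_sub_le _ _
      _ ≤ L * nU (u - v) + R * nU (u - v) := add_le_add (hF u v) (hElip u v)
      _ = (L + R) * nU (u - v) := by ring
  have hgbd : ∀ u, ‖F u - E u‖ ≤ (‖F 0‖ + B) + (L + R) * nU u := by
    intro u
    have h1 : ‖(F u - E u) - (F 0 - E 0)‖ ≤ (L + R) * nU u := by
      simpa using hglip u 0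
    have h2 : ‖F 0 - E 0‖ ≤ ‖F 0‖ + B :=
      (norm_sub_le _ _).trans (add_le_add_right hE0 _)
    calc ‖F u - E u‖ = ‖((F u - E u) - (F 0 - E 0)) + (F 0 - E 0)‖ := by abel_nf
      _ ≤ ‖(F u - E u) - (F 0 - E 0)‖ + ‖F 0 - E 0‖ := norm_add_le _ _
      _ ≤ (L + R) * nU u + (‖F 0‖ + B) := add_le_add h1 h2
      _ = (‖F 0‖ + B) + (L + R) * nU u := by ring
  -- continuity facts
  have hng2 : Continuous fun u : X × Θ => ‖F u - E u‖ ^ 2 := (hgc.norm).pow 2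
  have hnUc : Continuous fun u : X × Θ => nU u ^ 2 := nU_continuous.pow 2
  have hdc : Continuous fun p : (X × Θ) × (X × Θ) => nU (p.1 - p.2) :=
    nU_continuous.comp (continuous_fst.sub continuous_snd)
  -- transfer to γ
  have hr1 : risk F E ν = ∫ p, ‖F p.1 - E p.1‖ ^ 2 ∂γ := by
    rw [risk, ← hγ1, integral_map measurable_fst.aemeasurable hng2.aestronglyMeasurable]
  have hr2 : risk F E ν' = ∫ p, ‖F p.2 - E p.2‖ ^ 2 ∂γ := by
    rw [risk, ← hγ2, integral_map measurable_snd.aemeasurable hng2.aestronglyMeasurable]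
  have hm1 : Integrable (fun p : (X × Θ) × (X × Θ) => nU p.1 ^ 2) γ :=
    (integrable_map_measure hnUc.aestronglyMeasurable measurable_fst.aemeasurable).mp
      (by rw [hγ1]; exact hν)
  have hm2 : Integrable (fun p : (X × Θ) × (X × Θ) => nU p.2 ^ 2) γ :=
    (integrable_map_measure hnUc.aestronglyMeasurable measurable_snd.aemeasurable).mp
      (by rw [hγ2]; exact hν')
  have hI1 : ∫ u, nU u ^ 2 ∂ν = ∫ p, nU p.1 ^ 2 ∂γ := by
    rw [← hγ1, integral_map measurable_fst.aemeasurable hnUc.aestronglyMeasurable]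
  have hI2 : ∫ u, nU u ^ 2 ∂ν' = ∫ p, nU p.2 ^ 2 ∂γ := by
    rw [← hγ2, integral_map measurable_snd.aemeasurable hnUc.aestronglyMeasurable]
  -- integrability over γ
  have hd2 : Integrable (fun p : (X × Θ) × (X × Θ) => nU (p.1 - p.2) ^ 2) γ := by
    refine Integrable.mono' (show Integrable (fun p : (X × Θ) × (X × Θ) => 2 * (nU p.1 ^ 2 + nU p.2 ^ 2)) γ from (hm1.add hm2).const_mul 2) (hdc.pow 2).aestronglyMeasurable
      (Filter.Eventually.of_forall fun p => ?_)
    have h := nU_sub_le p.1 p.2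
    have h1 := nU_nonneg (p.1 - p.2); have h2 := nU_nonneg p.1; have h3 := nU_nonneg p.2
    rw [Real.norm_eq_abs, abs_of_nonneg (by positivity)]
    nlinarith [sq_nonneg (nU p.1 - nU p.2)]
  have hsumc : Continuous fun p : (X × Θ) × (X × Θ) => nU p.1 + nU p.2 :=
    (nU_continuous.comp continuous_fst).add (nU_continuous.comp continuous_snd)
  have hsum2 : Integrable (fun p : (X × Θ) × (X × Θ) => (nU p.1 + nU p.2) ^ 2) γ := by
    refine Integrable.mono' (show Integrable (fun p : (X × Θ) × (X × Θ) => 2 * (nU p.1 ^ 2 + nU p.2 ^ 2)) γ from (hm1.add hm2).const_mul 2) (hsumc.pow 2).aestronglyMeasurable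
      (Filter.Eventually.of_forall fun p => ?_)
    have h2 := nU_nonneg p.1; have h3 := nU_nonneg p.2
    rw [Real.norm_eq_abs, abs_of_nonneg (by positivity)]
    nlinarith [sq_nonneg (nU p.1 - nU p.2)]
  have hd1 : Integrable (fun p : (X × Θ) × (X × Θ) => nU (p.1 - p.2)) γ := by
    refine Integrable.mono' (show Integrable (fun p : (X × Θ) × (X × Θ) => 1 + nU (p.1 - p.2) ^ 2) γ from (integrable_const 1).add hd2) hdc.aestronglyMeasurable
      (Filter.Eventually.of_forall fun p => ?_)
    have h1 := nU_nonneg (p.1 - p.2)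
    rw [Real.norm_eq_abs, abs_of_nonneg h1]
    nlinarith [sq_nonneg (nU (p.1 - p.2) - 1)]
  have hds : Integrable (fun p : (X × Θ) × (X × Θ) => nU (p.1 - p.2) * (nU p.1 + nU p.2)) γ := by
    refine Integrable.mono' (show Integrable (fun p : (X × Θ) × (X × Θ) => (nU (p.1 - p.2) ^ 2 + (nU p.1 + nU p.2) ^ 2) / 2) γ from (hd2.add hsum2).div_const 2) (hdc.mul hsumc).aestronglyMeasurable
      (Filter.Eventually.of_forall fun p => ?_)
    have h1 := nU_nonneg (p.1 - p.2); have h2 := nU_nonneg p.1; have h3 := nU_nonneg p.2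
    rw [Real.norm_eq_abs, abs_of_nonneg (by positivity)]
    nlinarith [sq_nonneg (nU (p.1 - p.2) - (nU p.1 + nU p.2))]
  have hgint1 : Integrable (fun p : (X × Θ) × (X × Θ) => ‖F p.1 - E p.1‖ ^ 2) γ := by
    refine Integrable.mono'
      (show Integrable (fun p : (X × Θ) × (X × Θ) => 2 * (‖F 0‖ + B) ^ 2 + 2 * (L + R) ^ 2 * nU p.1 ^ 2) γ from
        (integrable_const (2 * (‖F 0‖ + B) ^ 2)).add (hm1.const_mul (2 * (L + R) ^ 2)))
      ((hng2.comp continuous_fst)).aestronglyMeasurable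
      (Filter.Eventually.of_forall fun p => ?_)
    have h := hgbd p.1
    have h4 := norm_nonneg (F p.1 - E p.1); have h5 := nU_nonneg p.1
    rw [Real.norm_eq_abs, abs_of_nonneg (by positivity)]
    nlinarith [sq_nonneg ((‖F 0‖ + B) - (L + R) * nU p.1)]
  have hgint2 : Integrable (fun p : (X × Θ) × (X × Θ) => ‖F p.2 - E p.2‖ ^ 2) γ := by
    refine Integrable.mono'
      (show Integrable (fun p : (X × Θ) × (X × Θ) => 2 * (‖F 0‖ + B) ^ 2 + 2 * (L + R) ^ 2 * nU p.2 ^ 2) γ from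
        (integrable_const (2 * (‖F 0‖ + B) ^ 2)).add (hm2.const_mul (2 * (L + R) ^ 2)))
      ((hng2.comp continuous_snd)).aestronglyMeasurable
      (Filter.Eventually.of_forall fun p => ?_)
    have h := hgbd p.2
    have h4 := norm_nonneg (F p.2 - E p.2); have h5 := nU_nonneg p.2
    rw [Real.norm_eq_abs, abs_of_nonneg (by positivity)]
    nlinarith [sq_nonneg ((‖F 0‖ + B) - (L + R) * nU p.2)]
  -- pointwise key bound
  have hkey : ∀ p : (X × Θ) × (X × Θ), ‖F p.1 - E p.1‖ ^ 2 - ‖F p.2 - E p.2‖ ^ 2 ≤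
      2 * (L + R) * (‖F 0‖ + B) * nU (p.1 - p.2)
        + (L + R) ^ 2 * (nU (p.1 - p.2) * (nU p.1 + nU p.2)) := by
    intro p
    have h1 : ‖F p.1 - E p.1‖ - ‖F p.2 - E p.2‖ ≤ (L + R) * nU (p.1 - p.2) :=
      (norm_sub_norm_le _ _).trans (hglip p.1 p.2)
    have h2 := hgbd p.1
    have h3 := hgbd p.2
    have h4 := norm_nonneg (F p.1 - E p.1); have h5 := norm_nonneg (F p.2 - E p.2)
    have h6 := nU_nonneg (p.1 - p.2); have h7 := nU_nonneg p.1; have h8 := nU_nonneg p.2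
    nlinarith [mul_nonneg (sub_nonneg.mpr h1) (add_nonneg h4 h5),
      mul_nonneg (mul_nonneg hC1 h6)
        (by linarith : (0:ℝ) ≤ ((‖F 0‖ + B) + (L + R) * nU p.1)
          + ((‖F 0‖ + B) + (L + R) * nU p.2) - (‖F p.1 - E p.1‖ + ‖F p.2 - E p.2‖))]
  -- assemble
  rw [hr1, hr2, ← integral_sub hgint1 hgint2]
  have hmono : ∫ p, (‖F p.1 - E p.1‖ ^ 2 - ‖F p.2 - E p.2‖ ^ 2) ∂γ ≤
      ∫ p, (2 * (L + R) * (‖F 0‖ + B) * nU (p.1 - p.2)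
        + (L + R) ^ 2 * (nU (p.1 - p.2) * (nU p.1 + nU p.2))) ∂γ :=
    integral_mono (hgint1.sub hgint2) ((hd1.const_mul _).add (hds.const_mul _)) hkey
  rw [integral_add (hd1.const_mul _) (hds.const_mul _), integral_const_mul,
    integral_const_mul] at hmono
  set D := ∫ p, nU (p.1 - p.2) ^ 2 ∂γ with hD_def
  have hDnn : 0 ≤ D := integral_nonneg fun p => sq_nonneg _
  have hsqrtD : 0 ≤ Real.sqrt D := Real.sqrt_nonneg _
  have hcs1 : ∫ p, nU (p.1 - p.2) ∂γ ≤ Real.sqrt D :=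
    integral_le_sqrt_integral_sq γ (fun p => nU_nonneg _) hd1 hd2
  have hcs2 : ∫ p, nU (p.1 - p.2) * (nU p.1 + nU p.2) ∂γ ≤
      Real.sqrt D * Real.sqrt (∫ p, (nU p.1 + nU p.2) ^ 2 ∂γ) :=
    integral_mul_le_sqrt_mul_sqrt γ (fun p => nU_nonneg _)
      (fun p => add_nonneg (nU_nonneg _) (nU_nonneg _)) hds hd2 hsum2
  have hS : ∫ p, (nU p.1 + nU p.2) ^ 2 ∂γ ≤
      2 * ((∫ u, nU u ^ 2 ∂ν) + ∫ u, nU u ^ 2 ∂ν') := by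
    rw [hI1, hI2]
    have hmono2 : ∫ p, (nU p.1 + nU p.2) ^ 2 ∂γ ≤
        ∫ p, (2 * nU p.1 ^ 2 + 2 * nU p.2 ^ 2) ∂γ :=
      integral_mono hsum2 (show Integrable
          (fun p : (X × Θ) × (X × Θ) => 2 * nU p.1 ^ 2 + 2 * nU p.2 ^ 2) γ from
          (hm1.const_mul 2).add (hm2.const_mul 2))
        (fun p => by nlinarith [sq_nonneg (nU p.1 - nU p.2)])
    rw [integral_add (hm1.const_mul 2) (hm2.const_mul 2), integral_const_mul,
      integral_const_mul] at hmono2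
    linarith
  have hS' : Real.sqrt (∫ p, (nU p.1 + nU p.2) ^ 2 ∂γ) ≤
      Real.sqrt (2 * ((∫ u, nU u ^ 2 ∂ν) + ∫ u, nU u ^ 2 ∂ν')) := Real.sqrt_le_sqrt hS
  have t1 : 2 * (L + R) * (‖F 0‖ + B) * ∫ p, nU (p.1 - p.2) ∂γ ≤
      2 * (L + R) * (‖F 0‖ + B) * Real.sqrt D :=
    mul_le_mul_of_nonneg_left hcs1 (by positivity)
  have t2 : (L + R) ^ 2 * ∫ p, nU (p.1 - p.2) * (nU p.1 + nU p.2) ∂γ ≤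
      (L + R) ^ 2 * (Real.sqrt D *
        Real.sqrt (2 * ((∫ u, nU u ^ 2 ∂ν) + ∫ u, nU u ^ 2 ∂ν'))) := by
    refine mul_le_mul_of_nonneg_left (hcs2.trans ?_) (sq_nonneg _)
    exact mul_le_mul_of_nonneg_left hS' hsqrtD
  simp only [cShift]
  nlinarith [t1, t2, hmono]


lemma cShift_comm (L R B : ℝ) (F : X × Θ → Y) (ν ν' : Measure (X × Θ)) :
    cShift L R B F ν' ν = cShift L R B F ν ν' := by
  simp only [cShift]
  rw [add_comm (∫ u, nU u ^ 2 ∂ν')]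

lemma cShift_nonneg {L R B : ℝ} (hL : 0 ≤ L) (hR : 0 ≤ R) (hB : 0 ≤ B)
    (F : X × Θ → Y) (ν ν' : Measure (X × Θ)) : 0 ≤ cShift L R B F ν ν' := by
  have h1 : 0 ≤ L + R := add_nonneg hL hR
  have h2 : 0 ≤ ‖F 0‖ + B := add_nonneg (norm_nonneg _) hB
  have h3 : 0 ≤ Real.sqrt (2 * ((∫ u, nU u ^ 2 ∂ν) + ∫ u, nU u ^ 2 ∂ν')) := Real.sqrt_nonneg _
  simp only [cShift]
  positivity

lemma risk_abs (F : X × Θ → Y) (L R B : ℝ) (hL : 0 ≤ L) (hR : 0 ≤ R) (hB : 0 ≤ B)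
    (hF : ∀ u v : X × Θ, ‖F u - F v‖ ≤ L * nU (u - v))
    {E : X × Θ → Y} (hE : E ∈ Hclass R B)
    (ν ν' : Measure (X × Θ)) [IsProbabilityMeasure ν] [IsProbabilityMeasure ν']
    (hν : Integrable (fun u => nU u ^ 2) ν) (hν' : Integrable (fun u => nU u ^ 2) ν') :
    |risk F E ν - risk F E ν'| ≤
      cShift L R B F ν ν' * W2 (fun u v => nU (u - v)) ν ν' := by
  have hcont : Continuous (fun p : (X × Θ) × (X × Θ) => nU (p.1 - p.2) ^ 2) :=
    (nU_continuous.comp (continuous_fst.sub continuous_snd)).pow 2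
  refine le_mul_sInf (cShift_nonneg hL hR hB F ν ν')
    ⟨_, ν.prod ν', inferInstance, by simp, by simp, rfl⟩ ?_
  rintro r ⟨γ, hP, h1, h2, rfl⟩
  haveI := hP
  rw [abs_sub_le_iff]
  refine ⟨risk_core F L R B hL hR hB hF hE ν ν' hν hν' γ h1 h2, ?_⟩
  haveI : IsProbabilityMeasure (γ.map Prod.swap) :=
    Measure.isProbabilityMeasure_map measurable_swap.aemeasurable
  have hsw1 : (γ.map Prod.swap).map Prod.fst = ν' := by
    rw [Measure.map_map measurable_fst measurable_swap]
    exact h2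
  have hsw2 : (γ.map Prod.swap).map Prod.snd = ν := by
    rw [Measure.map_map measurable_snd measurable_swap]
    exact h1
  have key := risk_core F L R B hL hR hB hF hE ν' ν hν' hν (γ.map Prod.swap) hsw1 hsw2
  have hint : ∫ p, nU (p.1 - p.2) ^ 2 ∂(γ.map Prod.swap) = ∫ p, nU (p.1 - p.2) ^ 2 ∂γ := by
    rw [integral_map measurable_swap.aemeasurable hcont.aestronglyMeasurable]
    exact integral_congr_ae (Filter.Eventually.of_forall fun p => by
      simp only [Prod.fst_swap, Prod.snd_swap]
      rw [nU_sub_rev])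
  rw [hint, cShift_comm] at key
  exact key


/-- **Proposition, quantitative bound-optimality.**
For every Borel probability measure `ν` with finite second moment,
`0 ≤ J(ν) − J(ν_dep) ≤ 2 c(ν,ν_dep) W₂(ν,ν_dep)`. -/
theorem bound_optimality_quantitative (F : X × Θ → Y) (L R B : ℝ)
    (hL : 0 ≤ L) (hR : 0 ≤ R) (hB : 0 ≤ B)
    (hF : ∀ u v : X × Θ, ‖F u - F v‖ ≤ L * nU (u - v))
    (νdep : Measure (X × Θ)) [IsProbabilityMeasure νdep]
    (hdep : Integrable (fun u => nU u ^ 2) νdep) :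
    ∀ ν : Measure (X × Θ), IsProbabilityMeasure ν → Integrable (fun u => nU u ^ 2) ν →
      0 ≤ Jobj L R B F νdep ν - Jobj L R B F νdep νdep ∧
        Jobj L R B F νdep ν - Jobj L R B F νdep νdep
          ≤ 2 * cShift L R B F ν νdep * W2 (fun u v => nU (u - v)) ν νdep := by
  intro ν hνP hν
  haveI := hνP
  have hH0 : (fun _ => (0 : Y)) ∈ Hclass (X := X) (Θ := Θ) R B := by
    constructor
    · intro u v
      simpa using mul_nonneg hR (nU_nonneg (u - v))
    · simpa using hB
  have himg_ne : ∀ μ : Measure (X × Θ), ((fun E => risk F E μ) '' Hclass R B).Nonempty :=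
    fun μ => ⟨_, Set.mem_image_of_mem _ hH0⟩
  have hbdd : ∀ μ : Measure (X × Θ), BddBelow ((fun E => risk F E μ) '' Hclass R B) := by
    intro μ
    refine ⟨0, ?_⟩
    rintro x ⟨E, _, rfl⟩
    exact integral_nonneg fun u => sq_nonneg _
  set c := cShift L R B F ν νdep with hc_def
  set W := W2 (fun u v : X × Θ => nU (u - v)) ν νdep with hW_def
  set Iν := sInf ((fun E => risk F E ν) '' Hclass R B) with hIν_def
  set Idep := sInf ((fun E => risk F E νdep) '' Hclass R B) with hIdep_def
  have hkey : ∀ E ∈ Hclass (X := X) (Θ := Θ) (Y := Y) R B,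
      |risk F E ν - risk F E νdep| ≤ c * W :=
    fun E hE => risk_abs F L R B hL hR hB hF hE ν νdep hν hdep
  have claim1 : Iν ≤ Idep + c * W := by
    have h : Iν - c * W ≤ Idep := by
      refine le_csInf (himg_ne νdep) ?_
      rintro y ⟨E, hE, rfl⟩
      have h1 : Iν ≤ risk F E ν := csInf_le (hbdd ν) (Set.mem_image_of_mem _ hE)
      have h2 := (abs_sub_le_iff.mp (hkey E hE)).1
      linarith
    linarith
  have claim2 : Idep ≤ Iν + c * W := by
    have h : Idep - c * W ≤ Iν := by
      refine le_csInf (himg_ne ν) ?_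
      rintro y ⟨E, hE, rfl⟩
      have h1 : Idep ≤ risk F E νdep := csInf_le (hbdd νdep) (Set.mem_image_of_mem _ hE)
      have h2 := (abs_sub_le_iff.mp (hkey E hE)).2
      linarith
    linarith
  have hJν : Jobj L R B F νdep ν = Iν + c * W := rfl
  have hJdep : Jobj L R B F νdep νdep = Idep := by
    rw [Jobj, W2_self_nU νdep, mul_zero, add_zero]
  rw [hJν, hJdep]
  constructor <;> linarith
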